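/- Let M be a matroid on a finite ground set E and let c : E → ℝ be a cost function. Let B be a base of M of minimum total cost, i.e., for every base B'' of M, Σ_{e∈B} c e ≤ Σ_{e∈B''} c e. Then for every base B' of M there exists a bijection φ : B → B' such that c e ≤ c (φ e) for every e ∈ B. -/

import Mathlib

open Set

/-- A cost-respecting bijection between `insert f D` and `insert e D`. -/
lemma swap_insert_equiv {α : Type*} {D : Set α} {f e : α} (hf : f ∉ D) (he : e ∉ D)
    (c : α → ℝ) (hfe : c f ≤ c e) :
    ∃ χ : (insert f D : Set α) ≃ (insert e D : Set α), ∀ x : (insert f D : Set α),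
      c (x : α) ≤ c (χ x : α) := by
  classical
  refine ⟨⟨fun x => if h : (x : α) = f then ⟨e, mem_insert _ _⟩ else
      ⟨x, mem_insert_iff.mpr (Or.inr ((mem_insert_iff.mp x.2).resolve_left h))⟩,
    fun y => if h : (y : α) = e then ⟨f, mem_insert _ _⟩ else
      ⟨y, mem_insert_iff.mpr (Or.inr ((mem_insert_iff.mp y.2).resolve_left h))⟩,
    ?_, ?_⟩, ?_⟩
  · rintro ⟨x, hx⟩
    by_cases hxf : x = f
    · simp [hxf]
    · have hxD : x ∈ D := (mem_insert_iff.mp hx).resolve_left hxf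
      have hxe : x ≠ e := fun h => he (h ▸ hxD)
      simp [hxf, hxe]
  · rintro ⟨y, hy⟩
    by_cases hye : y = e
    · simp [hye]
    · have hyD : y ∈ D := (mem_insert_iff.mp hy).resolve_left hye
      have hyf : y ≠ f := fun h => hf (h ▸ hyD)
      simp [hye, hyf]
  · rintro ⟨x, hx⟩
    by_cases hxf : x = f
    · simpa [hxf] using hfe
    · simp [hxf]

/-- Symmetric basis exchange for finite matroids. -/
lemma base_symm_exchange {α : Type*} (M : Matroid α) [M.Finite] {B B' : Set α}
    (hB : M.IsBase B) (hB' : M.IsBase B') {f : α} (hf : f ∈ B \ B') :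
    ∃ e ∈ B' \ B, M.IsBase (insert e (B \ {f})) ∧ M.IsBase (insert f (B' \ {e})) := by
  classical
  have hBi := hB.indep
  have hB'i := hB'.indep
  have hfE : f ∈ M.E := hBi.subset_ground hf.1
  have hB'fin : B'.Finite := M.set_finite B' hB'.subset_ground
  -- choose a minimal `J ⊆ B'` with `f ∈ closure J`
  set P : Set α → Prop := fun J => J ⊆ B' ∧ f ∈ M.closure J with hP
  have hPB' : P B' := ⟨Subset.rfl, by rw [hB'.closure_eq]; exact hfE⟩
  set S : Set ℕ := {n | ∃ J, P J ∧ J.ncard = n} with hS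
  have hSne : S.Nonempty := ⟨B'.ncard, B', hPB', rfl⟩
  obtain ⟨J, hJP, hJn⟩ : ∃ J, P J ∧ J.ncard = sInf S := Nat.sInf_mem hSne
  have hJfin : J.Finite := hB'fin.subset hJP.1
  have hminJ : ∀ K, K ⊂ J → f ∉ M.closure K := by
    intro K hK hfK
    have : K.ncard ∈ S := ⟨K, ⟨hK.subset.trans hJP.1, hfK⟩, rfl⟩
    exact (Nat.sInf_le this).not_gt (hJn ▸ Set.ncard_lt_ncard hK hJfin)
  -- `f` is not in the closure of `B \ {f}`
  have hfB : f ∉ M.closure (B \ {f}) := hBi.notMem_closure_diff_of_mem hf.1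
  -- pick `e ∈ J` outside the closure of `B \ {f}`
  obtain ⟨e, heJ, heX⟩ : ∃ e ∈ J, e ∉ M.closure (B \ {f}) := by
    by_contra h
    push_neg at h
    exact hfB (M.closure_subset_closure_of_subset_closure h hJP.2)
  have heB' : e ∈ B' := hJP.1 heJ
  have hef : e ≠ f := fun h => hf.2 (h ▸ heB')
  have heB : e ∉ B := by
    intro heB
    exact heX (M.subset_closure (B \ {f}) ((diff_subset (t := {f})).trans hBi.subset_ground)
      ⟨heB, hef⟩)
  -- first base
  have hIndep1 : M.Indep (insert e (B \ {f})) := by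
    rw [(hBi.subset diff_subset).insert_indep_iff_of_notMem (fun h => heB h.1)]
    exact ⟨hB'i.subset_ground heB', heX⟩
  have hBase1 : M.IsBase (insert e (B \ {f})) := hB.exchange_isBase_of_indep heB hIndep1
  -- second base
  have hfcl : f ∉ M.closure (B' \ {e}) := by
    intro hcon
    have h1 : f ∉ M.closure (J \ {e}) := hminJ _ (sdiff_singleton_ssubset.mpr heJ)
    have h2 : f ∈ M.closure (insert e (J \ {e})) := by
      rw [insert_diff_singleton, insert_eq_of_mem heJ]; exact hJP.2
    have h3 : e ∈ M.closure (insert f (J \ {e})) := (M.closure_exchange ⟨h2, h1⟩).1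
    have h4 : e ∈ M.closure (insert f (B' \ {e})) :=
      M.closure_subset_closure (insert_subset_insert (diff_subset_diff_left hJP.1)) h3
    rw [Matroid.closure_insert_eq_of_mem_closure hcon] at h4
    exact hB'i.notMem_closure_diff_of_mem heB' h4
  have hIndep2 : M.Indep (insert f (B' \ {e})) := by
    rw [(hB'i.subset diff_subset).insert_indep_iff_of_notMem (fun h => hf.2 h.1)]
    exact ⟨hfE, hfcl⟩
  exact ⟨e, ⟨heB', heB⟩, hBase1, hB'.exchange_isBase_of_indep hf.2 hIndep2⟩

theorem min_base_exchange_bijection {α : Type*} (M : Matroid α) [M.Finite]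
    (c : α → ℝ) (B : Set α) (hB : M.IsBase B)
    (hmin : ∀ B'' : Set α, M.IsBase B'' → ∑ᶠ e ∈ B, c e ≤ ∑ᶠ e ∈ B'', c e)
    (B' : Set α) (hB' : M.IsBase B') :
    ∃ φ : B ≃ B', ∀ e : B, c (e : α) ≤ c (φ e : α) := by
  classical
  suffices h : ∀ n (B' : Set α), M.IsBase B' → (B' \ B).ncard = n →
      ∃ φ : B ≃ B', ∀ e : B, c (e : α) ≤ c (φ e : α) from h _ B' hB' rfl
  intro n
  induction n using Nat.strong_induction_on with
  | _ n IH =>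
  intro B' hB' hn
  have hBfin : B.Finite := M.set_finite B hB.subset_ground
  have hB'fin : B'.Finite := M.set_finite B' hB'.subset_ground
  rcases eq_or_ne n 0 with rfl | hn0
  · have hsub : B' ⊆ B := by
      rw [← diff_eq_empty]
      exact (Set.ncard_eq_zero (hB'fin.diff)).mp hn
    have heq : B' = B := hB'.eq_of_subset_isBase hB hsub
    exact ⟨Equiv.setCongr heq.symm, fun x => by simp⟩
  · -- pick f ∈ B \ B'
    have hne : (B \ B').Nonempty := by
      rw [Set.nonempty_iff_ne_empty]
      intro h
      have h2 : (B' \ B).encard = 0 := by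
        rw [← hB.encard_diff_comm hB', h, Set.encard_empty]
      rw [Set.encard_eq_zero] at h2
      rw [h2, Set.ncard_empty] at hn
      exact hn0 hn.symm
    obtain ⟨f, hf⟩ := hne
    obtain ⟨e, he, hBase1, hBase2⟩ := base_symm_exchange M hB hB' hf
    -- cost comparison
    have hcfe : c f ≤ c e := by
      have hsum := hmin _ hBase1
      have hB_eq : ∑ᶠ x ∈ B, c x = c f + ∑ᶠ x ∈ B \ {f}, c x := by
        have h := finsum_mem_insert c (show f ∉ B \ {f} from fun h => h.2 rfl) (hBfin.diff)
        rwa [insert_diff_singleton, insert_eq_of_mem hf.1] at h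
      have h1_eq : ∑ᶠ x ∈ insert e (B \ {f}), c x = c e + ∑ᶠ x ∈ B \ {f}, c x :=
        finsum_mem_insert c (fun h => he.2 h.1) (hBfin.diff)
      rw [hB_eq, h1_eq] at hsum
      linarith
    -- the closer base B''
    set B'' : Set α := insert f (B' \ {e}) with hB''def
    have hdiff : B'' \ B = (B' \ B) \ {e} := by
      ext x
      simp only [hB''def, mem_diff, mem_insert_iff, mem_singleton_iff]
      constructor
      · rintro ⟨rfl | ⟨hxB', hxe⟩, hxB⟩
        · exact absurd hf.1 hxB
        · exact ⟨⟨hxB', hxB⟩, hxe⟩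
      · rintro ⟨⟨hxB', hxB⟩, hxe⟩
        exact ⟨Or.inr ⟨hxB', hxe⟩, hxB⟩
    have hcard : (B'' \ B).ncard = n - 1 := by
      rw [hdiff, Set.ncard_diff_singleton_of_mem he, hn]
    obtain ⟨ψ, hψ⟩ := IH (n - 1) (by omega) B'' hBase2 hcard
    -- swap equiv from B'' to B'
    obtain ⟨χ, hχ⟩ := swap_insert_equiv (D := B' \ {e}) (fun h => hf.2 h.1)
      (fun h => h.2 rfl) c hcfe
    have hB'eq : insert e (B' \ {e}) = B' := by
      rw [insert_diff_singleton, insert_eq_of_mem he.1]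
    refine ⟨ψ.trans (χ.trans (Equiv.setCongr hB'eq)), fun x => ?_⟩
    calc c (x : α) ≤ c (ψ x : α) := hψ x
      _ ≤ c (χ (ψ x) : α) := hχ (ψ x)
      _ = c ((Equiv.setCongr hB'eq) (χ (ψ x)) : α) := by simp
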